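/- For t > 0 and η = 1/t, for any real numbers e₀, …, e_n, the iterated time integral ∫_{s ∈ ℝ₊^{n+1}, ∑s_j = t} ∏_{j=0}^n e^{−i s_j e_j} ds (the integral of ∏ e^{−is_je_j} against the surface measure δ(t − ∑_{j=0}^n s_j)) equals (e^{ηt}/(2π)) ∫_ℝ e^{−iαt} ∏_{j=0}^n i/(α − e_j + iη) dα. -/

import Mathlib

open MeasureTheory Real Complex Set Filter FourierTransform



noncomputable def phi (c : ℂ) : ℝ → ℂ := fun s => if 0 ≤ s then Complex.exp (-(c * s)) else 0

lemma phi_eq_indicator (c : ℂ) : phi c = Set.indicator (Ici 0) (fun s : ℝ => Complex.exp (-(c * s))) := by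
  funext s
  simp [phi, Set.indicator, mem_Ici]

lemma norm_cexp_neg_mul (c : ℂ) (s : ℝ) : ‖Complex.exp (-(c * s))‖ = Real.exp (-(c.re * s)) := by
  rw [Complex.norm_exp]
  norm_num [Complex.mul_re]

lemma phi_norm (c : ℂ) (s : ℝ) : ‖phi c s‖ = if 0 ≤ s then Real.exp (-(c.re * s)) else 0 := by
  unfold phi
  split
  · exact norm_cexp_neg_mul c s
  · simp

lemma phi_integrable {c : ℂ} (hc : 0 < c.re) : Integrable (phi c) := by
  rw [phi_eq_indicator, integrable_indicator_iff measurableSet_Ici]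
  have h1 : IntegrableOn (fun s : ℝ => Real.exp (-c.re * s)) (Ici 0) := by
    rw [integrableOn_Ici_iff_integrableOn_Ioi]
    exact exp_neg_integrableOn_Ioi 0 hc
  refine h1.integrable.mono' ?_ ?_
  · exact (Complex.continuous_exp.comp (by continuity)).aestronglyMeasurable
  · filter_upwards [self_mem_ae_restrict measurableSet_Ici] with s _
    rw [norm_cexp_neg_mul]
    exact le_of_eq (by ring_nf)

lemma phi_norm_le_one {c : ℂ} (hc : 0 ≤ c.re) (s : ℝ) : ‖phi c s‖ ≤ 1 := by
  rw [phi_norm]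
  split
  · exact Real.exp_le_one_iff.mpr (by nlinarith)
  · norm_num

lemma integral_cexp_neg_Ioi {d : ℂ} (hd : 0 < d.re) :
    ∫ x in Ioi (0:ℝ), Complex.exp (-(d * x)) = d⁻¹ := by
  have hder : ∀ x ∈ Ici (0:ℝ), HasDerivAt (fun x : ℝ => -d⁻¹ * Complex.exp (-(d * x)))
      (Complex.exp (-(d * x))) x := by
    intro x _
    have h1 : HasDerivAt (fun x : ℝ => -(d * x)) (-d) x := by
      simpa [Pi.neg_def] using ((Complex.ofRealCLM.hasDerivAt (x := x)).const_mul d).neg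
    have h2 := (Complex.hasDerivAt_exp (-(d * x))).comp x h1
    have h3 := h2.const_mul (-d⁻¹)
    convert h3 using 1
    · rfl
    · rfl
    have hd0 : d ≠ 0 := fun h => by simp [h] at hd
    rw [mul_comm (Complex.exp _) (-d), ← mul_assoc, neg_mul_neg, inv_mul_cancel₀ hd0, one_mul]
  have hint : IntegrableOn (fun x : ℝ => Complex.exp (-(d * x))) (Ioi 0) := by
    have := phi_integrable hd
    rw [phi_eq_indicator, integrable_indicator_iff measurableSet_Ici] at this
    exact this.mono_set Ioi_subset_Ici_self
  have htend : Tendsto (fun x : ℝ => -d⁻¹ * Complex.exp (-(d * x))) atTop (nhds 0) := by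
    rw [show (0:ℂ) = -d⁻¹ * 0 by ring]
    apply Tendsto.const_mul
    rw [tendsto_zero_iff_norm_tendsto_zero]
    simp only [norm_cexp_neg_mul]
    exact Real.tendsto_exp_atBot.comp (tendsto_neg_atBot_iff.mpr
      (Tendsto.const_mul_atTop hd tendsto_id))
  have := integral_Ioi_of_hasDerivAt_of_tendsto' hder hint htend
  rw [this]
  simp





lemma conv_double_integrable {c : ℂ} {g : ℝ → ℂ} (hc : 0 < c.re) (hg : Integrable g) :
    Integrable (fun p : ℝ × ℝ => phi c (p.1 - p.2) * g p.2) (volume.prod volume) := by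
  have h := hg.convolution_integrand (ContinuousLinearMap.mul ℂ ℂ) (phi_integrable hc)
  simpa [ContinuousLinearMap.mul_apply', mul_comm] using h

lemma conv_integrable {c : ℂ} {g : ℝ → ℂ} (hc : 0 < c.re) (hg : Integrable g) :
    Integrable (fun x => ∫ u, phi c (x - u) * g u) :=
  (conv_double_integrable hc hg).integral_prod_left

lemma fourier_conv {c : ℂ} {g : ℝ → ℂ} (hc : 0 < c.re) (hg : Integrable g) (ξ : ℝ) :
    𝓕 (fun x => ∫ u, phi c (x - u) * g u) ξ = 𝓕 (phi c) ξ * 𝓕 g ξ := by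
  have hJ : Integrable (Function.uncurry fun x u : ℝ =>
      Complex.exp (((-2) * π * x * ξ : ℝ) * Complex.I) • (phi c (x - u) * g u))
      (volume.prod volume) := by
    apply Integrable.bdd_mul (c := 1) (conv_double_integrable hc hg)
    · exact (Complex.continuous_exp.comp (by continuity)).aestronglyMeasurable
    · filter_upwards with p
      rw [Complex.norm_exp_ofReal_mul_I]
  have key : ∀ u : ℝ, (∫ x : ℝ, Complex.exp (((-2) * π * x * ξ : ℝ) * Complex.I) • (phi c (x - u) * g u))
      = 𝓕 (phi c) ξ * (Complex.exp (((-2) * π * u * ξ : ℝ) * Complex.I) * g u) := by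
    intro u
    rw [← integral_add_right_eq_self (fun x : ℝ =>
      Complex.exp (((-2) * π * x * ξ : ℝ) * Complex.I) • (phi c (x - u) * g u)) u]
    have : ∀ x : ℝ, Complex.exp (((-2) * π * (x + u) * ξ : ℝ) * Complex.I) • (phi c (x + u - u) * g u)
        = (Complex.exp (((-2) * π * u * ξ : ℝ) * Complex.I) * g u) *
          (Complex.exp (((-2) * π * x * ξ : ℝ) * Complex.I) * phi c x) := by
      intro x
      rw [add_sub_cancel_right, smul_eq_mul,
        show (((-2) * π * (x + u) * ξ : ℝ) : ℂ) * Complex.I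
          = (((-2) * π * x * ξ : ℝ) : ℂ) * Complex.I + (((-2) * π * u * ξ : ℝ) : ℂ) * Complex.I by
            push_cast; ring,
        Complex.exp_add]
      ring
    simp_rw [this]
    rw [MeasureTheory.integral_const_mul, Real.fourier_real_eq_integral_exp_smul]
    simp_rw [smul_eq_mul]
    ring
  rw [Real.fourier_real_eq_integral_exp_smul]
  simp_rw [← MeasureTheory.integral_smul]
  rw [MeasureTheory.integral_integral_swap hJ]
  simp_rw [key]
  rw [MeasureTheory.integral_const_mul]
  congr 1
  rw [Real.fourier_real_eq_integral_exp_smul]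
  simp_rw [smul_eq_mul]


lemma conv_eq_primitive {c : ℂ} {g : ℝ → ℂ} (x : ℝ) :
    (∫ u, phi c (x - u) * g u) = Complex.exp (-(c * x)) * ∫ u in Iic x, Complex.exp (c * u) * g u := by
  have h : ∀ u : ℝ, phi c (x - u) * g u
      = Set.indicator (Iic x) (fun u : ℝ => Complex.exp (-(c * x)) * (Complex.exp (c * u) * g u)) u := by
    intro u
    by_cases h : u ≤ x
    · rw [Set.indicator_of_mem (mem_Iic.mpr h)]
      unfold phi
      rw [if_pos (by linarith : (0:ℝ) ≤ x - u),
        show -(c * ((x - u : ℝ) : ℂ)) = -(c * x) + c * u by push_cast; ring, Complex.exp_add]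
      ring
    · rw [Set.indicator_of_notMem (by simpa using h)]
      unfold phi
      rw [if_neg (by linarith), zero_mul]
  simp_rw [h]
  rw [MeasureTheory.integral_indicator measurableSet_Iic, MeasureTheory.integral_const_mul]

lemma integrableOn_Iic_exp_mul {c : ℂ} {g : ℝ → ℂ} (hc : 0 < c.re) (hg : Integrable g) (b : ℝ) :
    IntegrableOn (fun u : ℝ => Complex.exp (c * u) * g u) (Iic b) := by
  refine Integrable.mono' ((hg.norm.const_mul (Real.exp (c.re * b))).restrict) ?_ ?_
  · exact ((Complex.continuous_exp.comp (by continuity)).aestronglyMeasurable.mul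
      hg.aestronglyMeasurable).restrict
  · filter_upwards [self_mem_ae_restrict measurableSet_Iic] with u hu
    rw [norm_mul, show ‖Complex.exp (c * u)‖ = Real.exp (c.re * u) by
      rw [Complex.norm_exp]; norm_num [Complex.mul_re]]
    have : Real.exp (c.re * u) ≤ Real.exp (c.re * b) :=
      Real.exp_le_exp.mpr (mul_le_mul_of_nonneg_left (mem_Iic.mp hu) hc.le)
    exact mul_le_mul_of_nonneg_right this (norm_nonneg _)

lemma conv_continuous {c : ℂ} {g : ℝ → ℂ} (hc : 0 < c.re) (hg : Integrable g) :
    Continuous (fun x => ∫ u, phi c (x - u) * g u) := by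
  have hInt := integrableOn_Iic_exp_mul hc hg
  have hii : ∀ a b : ℝ, IntervalIntegrable (fun u : ℝ => Complex.exp (c * u) * g u) volume a b :=
    fun a b => ((hInt (max a b)).mono_set (fun u hu => le_trans hu.2 (le_refl _))).intervalIntegrable
  have hcont : Continuous fun x : ℝ => Complex.exp (-(c * x)) *
      ((∫ u in Iic (0:ℝ), Complex.exp (c * u) * g u) + ∫ u in (0:ℝ)..x, Complex.exp (c * u) * g u) := by
    apply Continuous.mul
    · exact Complex.continuous_exp.comp (by continuity)
    · exact continuous_const.add (intervalIntegral.continuous_primitive hii 0)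
  apply hcont.congr
  intro x
  rw [conv_eq_primitive]
  congr 1
  have := intervalIntegral.integral_Iic_sub_Iic (μ := volume) (a := 0) (b := x) (hInt 0) (hInt x)
  linear_combination -this



lemma fourier_phi {c : ℂ} (hc : 0 < c.re) (ξ : ℝ) :
    𝓕 (phi c) ξ = (c + ((2*π*ξ : ℝ) : ℂ) * Complex.I)⁻¹ := by
  rw [Real.fourier_real_eq_integral_exp_smul]
  have h : ∀ x : ℝ, Complex.exp (((-2) * π * x * ξ : ℝ) * Complex.I) • phi c x
      = Set.indicator (Ici 0) (fun x : ℝ => Complex.exp (-((c + ((2*π*ξ : ℝ) : ℂ) * Complex.I) * x))) x := by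
    intro x
    unfold phi
    by_cases hx : 0 ≤ x
    · rw [if_pos hx, Set.indicator_of_mem (mem_Ici.mpr hx), smul_eq_mul, ← Complex.exp_add]
      congr 1
      push_cast
      ring
    · rw [if_neg hx, Set.indicator_of_notMem (by simpa using hx), smul_zero]
  simp_rw [h]
  rw [MeasureTheory.integral_indicator measurableSet_Ici,
    MeasureTheory.integral_Ici_eq_integral_Ioi]
  apply integral_cexp_neg_Ioi
  simpa [Complex.add_re, Complex.mul_re] using hc

noncomputable def S (m : ℕ) (c : Fin (m+1) → ℂ) (τ : ℝ) : ℂ :=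
  ∫ s in {s : Fin m → ℝ | (∀ j, 0 ≤ s j) ∧ ∑ j, s j ≤ τ},
    (∏ j, Complex.exp (-(c j.succ * ((s j : ℝ) : ℂ)))) * Complex.exp (-(c 0 * ((τ - ∑ j, s j : ℝ) : ℂ)))

lemma S_zero (c : Fin 1 → ℂ) : S 0 c = phi (c 0) := by
  funext τ
  unfold S phi
  by_cases h : 0 ≤ τ
  · have hA : {s : Fin 0 → ℝ | (∀ j, 0 ≤ s j) ∧ ∑ j, s j ≤ τ} = univ := by
      ext s; simp [h]
    rw [hA, if_pos h, MeasureTheory.setIntegral_univ]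
    rw [MeasureTheory.integral_unique]
    simp [MeasureTheory.volume_pi, MeasureTheory.Measure.pi_univ, Measure.real]
  · have hA : {s : Fin 0 → ℝ | (∀ j, 0 ≤ s j) ∧ ∑ j, s j ≤ τ} = ∅ := by
      ext s; simp [h]
    rw [hA, if_neg h]
    simp




lemma measurableSet_simplex (m : ℕ) (τ : ℝ) :
    MeasurableSet {s : Fin m → ℝ | (∀ j, 0 ≤ s j) ∧ ∑ j, s j ≤ τ} := by
  have : {s : Fin m → ℝ | (∀ j, 0 ≤ s j) ∧ ∑ j, s j ≤ τ}
      = (⋂ j, {s : Fin m → ℝ | 0 ≤ s j}) ∩ {s : Fin m → ℝ | ∑ j, s j ≤ τ} := by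
    ext s; simp [mem_iInter, mem_setOf_eq]
  rw [this]
  exact (MeasurableSet.iInter fun j =>
      measurableSet_le measurable_const (measurable_pi_apply j)).inter
    (measurableSet_le (Finset.measurable_sum _ fun j _ => measurable_pi_apply j) measurable_const)

lemma simplex_volume_lt_top (m : ℕ) (τ : ℝ) :
    volume {s : Fin m → ℝ | (∀ j, 0 ≤ s j) ∧ ∑ j, s j ≤ τ} < ⊤ := by
  have hsub : {s : Fin m → ℝ | (∀ j, 0 ≤ s j) ∧ ∑ j, s j ≤ τ}
      ⊆ Set.pi univ (fun _ : Fin m => Icc 0 τ) := by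
    intro s hs
    intro j _
    refine ⟨hs.1 j, le_trans ?_ hs.2⟩
    exact Finset.single_le_sum (f := fun j => s j) (fun i _ => hs.1 i) (Finset.mem_univ j)
  refine lt_of_le_of_lt (measure_mono hsub) ?_
  rw [volume_pi, Measure.pi_pi]
  exact ENNReal.prod_lt_top fun i _ => by simp [Real.volume_Icc]

lemma S_integrand_norm_le {m : ℕ} (c : Fin (m+1) → ℂ) (hc : ∀ j, 0 < (c j).re) (τ : ℝ)
    {s : Fin m → ℝ} (hs : s ∈ {s : Fin m → ℝ | (∀ j, 0 ≤ s j) ∧ ∑ j, s j ≤ τ}) :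
    ‖(∏ j, Complex.exp (-(c j.succ * ((s j : ℝ) : ℂ)))) *
      Complex.exp (-(c 0 * ((τ - ∑ j, s j : ℝ) : ℂ)))‖ ≤ 1 := by
  rw [norm_mul]
  have h1 : ‖∏ j, Complex.exp (-(c j.succ * ((s j : ℝ) : ℂ)))‖ ≤ 1 := by
    rw [norm_prod]
    apply Finset.prod_le_one
    · intro j _; exact norm_nonneg _
    · intro j _
      rw [norm_cexp_neg_mul]
      exact Real.exp_le_one_iff.mpr (by nlinarith [(hc j.succ).le, hs.1 j])
  have h2 : ‖Complex.exp (-(c 0 * ((τ - ∑ j, s j : ℝ) : ℂ)))‖ ≤ 1 := by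
    rw [norm_cexp_neg_mul]
    have h3 : (0:ℝ) ≤ τ - ∑ j, s j := by linarith [hs.2]
    exact Real.exp_le_one_iff.mpr (by nlinarith [(hc 0).le])
  calc ‖_‖ * ‖_‖ ≤ 1 * 1 := mul_le_mul h1 h2 (norm_nonneg _) zero_le_one
  _ = 1 := mul_one 1

lemma S_integrand_integrableOn {m : ℕ} (c : Fin (m+1) → ℂ) (hc : ∀ j, 0 < (c j).re) (τ : ℝ) :
    IntegrableOn (fun s : Fin m → ℝ =>
      (∏ j, Complex.exp (-(c j.succ * ((s j : ℝ) : ℂ)))) *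
        Complex.exp (-(c 0 * ((τ - ∑ j, s j : ℝ) : ℂ))))
      {s : Fin m → ℝ | (∀ j, 0 ≤ s j) ∧ ∑ j, s j ≤ τ} := by
  refine Integrable.mono' (g := fun _ => (1:ℝ))
    (integrableOn_const (simplex_volume_lt_top m τ).ne) ?_ ?_
  · apply Continuous.aestronglyMeasurable ?_ |>.restrict
    apply Continuous.mul
    · exact continuous_finset_prod _ fun j _ =>
        Complex.continuous_exp.comp (by continuity)
    · exact Complex.continuous_exp.comp (by continuity)
  · filter_upwards [self_mem_ae_restrict (measurableSet_simplex m τ)] with s hs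
    exact S_integrand_norm_le c hc τ hs

lemma S_succ (m : ℕ) (c : Fin (m+2) → ℂ) (hc : ∀ j, 0 < (c j).re) (t : ℝ) :
    S (m+1) c t = ∫ a : ℝ, phi (c 1) a *
      S m (Fin.cons (c 0) (fun j : Fin m => c j.succ.succ)) (t - a) := by
  set d : Fin (m+1) → ℂ := Fin.cons (c 0) (fun j : Fin m => c j.succ.succ) with hd
  set f : (Fin (m+1) → ℝ) → ℂ := fun s =>
    (∏ j, Complex.exp (-(c j.succ * ((s j : ℝ) : ℂ)))) *
      Complex.exp (-(c 0 * ((t - ∑ j, s j : ℝ) : ℂ))) with hf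
  set A : Set (Fin (m+1) → ℝ) := {s | (∀ j, 0 ≤ s j) ∧ ∑ j, s j ≤ t} with hA
  set G : (Fin (m+1) → ℝ) → ℂ := Set.indicator A f with hG
  have hAm : MeasurableSet A := measurableSet_simplex (m+1) t
  have hGint : Integrable G := by
    rw [hG, integrable_indicator_iff hAm]
    exact S_integrand_integrableOn c hc t
  have step1 : S (m+1) c t = ∫ s, G s := by
    rw [hG, MeasureTheory.integral_indicator hAm]
    rfl
  -- change of variables
  have mp := measurePreserving_piFinSuccAbove (fun _ : Fin (m+1) => (volume : Measure ℝ)) 0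
  set e := MeasurableEquiv.piFinSuccAbove (fun _ : Fin (m+1) => ℝ) 0 with he
  have mp' : MeasurePreserving (⇑e) (volume : Measure (Fin (m+1) → ℝ))
      ((volume : Measure ℝ).prod (volume : Measure (Fin m → ℝ))) := by
    have h1 : (Measure.pi fun _ : Fin (m+1) => (volume : Measure ℝ)) = volume := volume_pi.symm
    have h2 : (Measure.pi fun _ : Fin m => (volume : Measure ℝ)) = volume := volume_pi.symm
    rw [h1, h2] at mp
    exact mp
  have hsymm : ∀ p : ℝ × (Fin m → ℝ), e.symm p = Fin.cons p.1 p.2 := by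
    intro p
    simp [he, MeasurableEquiv.piFinSuccAbove_symm_apply, Fin.insertNthEquiv, Fin.insertNth_zero]
  have step2 : ∫ s, G s = ∫ p : ℝ × (Fin m → ℝ), G (Fin.cons p.1 p.2)
      ∂((volume : Measure ℝ).prod (volume : Measure (Fin m → ℝ))) := by
    rw [← (mp'.symm).integral_comp e.symm.measurableEmbedding G]
    simp_rw [hsymm]
  have hGint' : Integrable (fun p : ℝ × (Fin m → ℝ) => G (Fin.cons p.1 p.2))
      ((volume : Measure ℝ).prod (volume : Measure (Fin m → ℝ))) := by
    have : Integrable (fun p : ℝ × (Fin m → ℝ) => G (e.symm p))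
        ((volume : Measure ℝ).prod (volume : Measure (Fin m → ℝ))) := by
      exact ((mp'.symm).integrable_comp_emb e.symm.measurableEmbedding).mpr hGint
    apply this.congr
    filter_upwards with p
    rw [hsymm]
  have step3 : ∫ p : ℝ × (Fin m → ℝ), G (Fin.cons p.1 p.2)
      ∂((volume : Measure ℝ).prod (volume : Measure (Fin m → ℝ)))
      = ∫ a : ℝ, ∫ s : Fin m → ℝ, G (Fin.cons a s) := MeasureTheory.integral_prod _ hGint'
  have inner : ∀ a : ℝ, (∫ s : Fin m → ℝ, G (Fin.cons a s)) = phi (c 1) a * S m d (t - a) := by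
    intro a
    by_cases ha : 0 ≤ a
    · have hpt : ∀ s : Fin m → ℝ, G (Fin.cons a s)
          = Set.indicator {s : Fin m → ℝ | (∀ j, 0 ≤ s j) ∧ ∑ j, s j ≤ t - a}
            (fun s => Complex.exp (-(c 1 * (a:ℂ))) *
              ((∏ j, Complex.exp (-(d j.succ * ((s j : ℝ) : ℂ)))) *
                Complex.exp (-(d 0 * ((t - a - ∑ j, s j : ℝ) : ℂ))))) s := by
        intro s
        have hmem : Fin.cons a s ∈ A ↔ (∀ j, 0 ≤ s j) ∧ ∑ j, s j ≤ t - a := by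
          rw [hA]
          simp only [mem_setOf_eq, Fin.sum_cons, Fin.forall_fin_succ, Fin.cons_zero, Fin.cons_succ]
          constructor
          · rintro ⟨⟨_, h1⟩, h2⟩; exact ⟨h1, by linarith⟩
          · rintro ⟨h1, h2⟩; exact ⟨⟨ha, h1⟩, by linarith⟩
        have hval : f (Fin.cons a s) = Complex.exp (-(c 1 * (a:ℂ))) *
            ((∏ j, Complex.exp (-(d j.succ * ((s j : ℝ) : ℂ)))) *
              Complex.exp (-(d 0 * ((t - a - ∑ j, s j : ℝ) : ℂ)))) := by
          rw [hf]
          simp only [Fin.prod_univ_succ, Fin.cons_zero, Fin.cons_succ, Fin.sum_cons, hd,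
            Fin.succ_zero_eq_one]
          rw [show ((t - (a + ∑ j, s j) : ℝ) : ℂ) = ((t - a - ∑ j, s j : ℝ) : ℂ) by push_cast; ring]
          ring_nf
        by_cases hs : s ∈ {s : Fin m → ℝ | (∀ j, 0 ≤ s j) ∧ ∑ j, s j ≤ t - a}
        · rw [Set.indicator_of_mem hs, hG, Set.indicator_of_mem (hmem.mpr hs), hval]
        · rw [Set.indicator_of_notMem hs, hG, Set.indicator_of_notMem (fun h => hs (hmem.mp h))]
      simp_rw [hpt]
      rw [MeasureTheory.integral_indicator (measurableSet_simplex m (t - a)),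
        MeasureTheory.integral_const_mul]
      rw [show phi (c 1) a = Complex.exp (-(c 1 * (a:ℂ))) from if_pos ha]
      rfl
    · have hpt : ∀ s : Fin m → ℝ, G (Fin.cons a s) = 0 := by
        intro s
        rw [hG]
        apply Set.indicator_of_notMem
        rw [hA]
        intro h
        exact ha (by simpa using h.1 0)
      simp_rw [hpt]
      rw [MeasureTheory.integral_zero]
      rw [show phi (c 1) a = 0 from if_neg ha, zero_mul]
  rw [step1, step2, step3]
  exact MeasureTheory.integral_congr_ae (Filter.Eventually.of_forall inner)

lemma conv_swap {c : ℂ} (g : ℝ → ℂ) (x : ℝ) :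
    (∫ a, phi c a * g (x - a)) = ∫ u, phi c (x - u) * g u := by
  rw [← MeasureTheory.integral_sub_left_eq_self (fun a => phi c a * g (x - a)) volume x]
  congr 1
  funext u
  rw [sub_sub_cancel]

lemma S_props (m : ℕ) (c : Fin (m+1) → ℂ) (hc : ∀ j, 0 < (c j).re) :
    Integrable (S m c) ∧
      (∀ ξ : ℝ, 𝓕 (S m c) ξ = ∏ j, (c j + ((2*π*ξ : ℝ) : ℂ) * Complex.I)⁻¹) ∧
      (1 ≤ m → Continuous (S m c)) := by
  induction m with
  | zero =>
    refine ⟨?_, ?_, by omega⟩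
    · rw [S_zero]; exact phi_integrable (hc 0)
    · intro ξ
      rw [S_zero, fourier_phi (hc 0), Fin.prod_univ_one]
  | succ m ih =>
    set d : Fin (m+1) → ℂ := Fin.cons (c 0) (fun j : Fin m => c j.succ.succ) with hd
    have hdc : ∀ j, 0 < (d j).re := by
      intro j
      refine Fin.cases ?_ ?_ j
      · rw [hd, Fin.cons_zero]; exact hc 0
      · intro i; rw [hd, Fin.cons_succ]; exact hc _
    obtain ⟨hint, hF, _⟩ := ih d hdc
    have hrec : S (m+1) c = fun x => ∫ u, phi (c 1) (x - u) * S m d u := by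
      funext x
      rw [S_succ m c hc x, ← hd, conv_swap (S m d) x]
    refine ⟨?_, ?_, fun _ => ?_⟩
    · rw [hrec]; exact conv_integrable (hc 1) hint
    · intro ξ
      rw [hrec, fourier_conv (hc 1) hint, fourier_phi (hc 1), hF ξ]
      rw [Fin.prod_univ_succ (f := fun j : Fin (m+1) => (d j + ((2*π*ξ : ℝ) : ℂ) * Complex.I)⁻¹)]
      rw [Fin.prod_univ_succ (f := fun j : Fin (m+2) => (c j + ((2*π*ξ : ℝ) : ℂ) * Complex.I)⁻¹)]
      rw [Fin.prod_univ_succ (f := fun j : Fin (m+1) => (c j.succ + ((2*π*ξ : ℝ) : ℂ) * Complex.I)⁻¹)]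
      simp only [hd, Fin.cons_zero, Fin.cons_succ, Fin.succ_zero_eq_one]
      ring
    · rw [hrec]; exact conv_continuous (hc 1) hint

lemma base_integrable {η : ℝ} (hη : 0 < η) (E : ℝ) :
    Integrable (fun ξ : ℝ => (η^2 + (E + 2*π*ξ)^2)⁻¹) := by
  have h2 : Integrable (fun y : ℝ => (1 + (η⁻¹*y)^2)⁻¹) :=
    (integrable_comp_mul_left_iff (fun x : ℝ => (1+x^2)⁻¹) (inv_ne_zero hη.ne')).mpr
      integrable_inv_one_add_sq
  have h1 : Integrable (fun y : ℝ => (η^2 + y^2)⁻¹) := by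
    apply (h2.const_mul ((η^2)⁻¹)).congr
    filter_upwards with y
    rw [← mul_inv]
    congr 1
    field_simp
  have h3 := h1.comp_add_right E
  have h4 := (integrable_comp_mul_left_iff (fun y : ℝ => (η^2 + (y + E)^2)⁻¹)
    (by positivity : (2*π : ℝ) ≠ 0)).mpr h3
  apply h4.congr
  filter_upwards with ξ
  ring_nf

lemma P_integrable (k : ℕ) {η : ℝ} (hη : 0 < η) (e : Fin (k+2) → ℝ) :
    Integrable (fun ξ : ℝ =>
      ∏ j : Fin (k+2), (((η:ℂ) + Complex.I * (e j : ℂ)) + ((2*π*ξ : ℝ) : ℂ) * Complex.I)⁻¹) := by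
  set z : Fin (k+2) → ℝ → ℂ :=
    fun j ξ => ((η:ℂ) + Complex.I * (e j : ℂ)) + ((2*π*ξ : ℝ) : ℂ) * Complex.I with hz
  have hre : ∀ j ξ, (z j ξ).re = η := by intro j ξ; simp [hz]
  have him : ∀ j ξ, (z j ξ).im = e j + 2*π*ξ := by intro j ξ; simp [hz]
  have hne : ∀ j ξ, z j ξ ≠ 0 := by
    intro j ξ h
    have := hre j ξ
    rw [h] at this
    simp at this
    exact hη.ne this
  have ha_le : ∀ j ξ, ‖(z j ξ)⁻¹‖ ≤ η⁻¹ := by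
    intro j ξ
    rw [norm_inv]
    apply inv_anti₀ hη
    calc η = (z j ξ).re := (hre j ξ).symm
    _ ≤ |(z j ξ).re| := le_abs_self _
    _ ≤ ‖z j ξ‖ := Complex.abs_re_le_norm _
  have ha_sq : ∀ j ξ, ‖(z j ξ)⁻¹‖^2 = (η^2 + (e j + 2*π*ξ)^2)⁻¹ := by
    intro j ξ
    rw [norm_inv, inv_pow]
    congr 1
    rw [Complex.sq_norm, Complex.normSq_apply, hre, him]
    ring
  refine Integrable.mono'
    ((((base_integrable hη (e 0)).add (base_integrable hη (e 1))).const_mul 2⁻¹).const_mul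
      (η⁻¹^k)) ?_ ?_
  · apply Continuous.aestronglyMeasurable
    apply continuous_finset_prod
    intro j _
    exact Continuous.inv₀ (by continuity) (hne j)
  · filter_upwards with ξ
    rw [norm_prod]
    have key : ∀ j, ‖(z j ξ)⁻¹‖ = ‖(z j ξ)⁻¹‖ := fun _ => rfl
    rw [Fin.prod_univ_succ, Fin.prod_univ_succ]
    have hrest : ∏ j : Fin k, ‖(z j.succ.succ ξ)⁻¹‖ ≤ η⁻¹^k := by
      calc ∏ j : Fin k, ‖(z j.succ.succ ξ)⁻¹‖ ≤ ∏ _j : Fin k, η⁻¹ :=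
        Finset.prod_le_prod (fun j _ => norm_nonneg _) (fun j _ => ha_le j.succ.succ ξ)
      _ = η⁻¹^k := by rw [Finset.prod_const, Finset.card_univ, Fintype.card_fin]
    have h01 : ‖(z 0 ξ)⁻¹‖ * ‖(z 1 ξ)⁻¹‖
        ≤ 2⁻¹ * ((η^2 + (e 0 + 2*π*ξ)^2)⁻¹ + (η^2 + (e 1 + 2*π*ξ)^2)⁻¹) := by
      have h0 := ha_sq 0 ξ
      have h1 := ha_sq 1 ξ
      nlinarith [sq_nonneg (‖(z 0 ξ)⁻¹‖ - ‖(z 1 ξ)⁻¹‖), norm_nonneg ((z 0 ξ)⁻¹),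
        norm_nonneg ((z 1 ξ)⁻¹)]
    have hnn : (0:ℝ) ≤ ∏ j : Fin k, ‖(z j.succ.succ ξ)⁻¹‖ :=
      Finset.prod_nonneg fun j _ => norm_nonneg _
    calc ‖(z 0 ξ)⁻¹‖ * (‖(z (Fin.succ 0) ξ)⁻¹‖ * ∏ j : Fin k, ‖(z j.succ.succ ξ)⁻¹‖)
        = (‖(z 0 ξ)⁻¹‖ * ‖(z 1 ξ)⁻¹‖) * ∏ j : Fin k, ‖(z j.succ.succ ξ)⁻¹‖ := by
          rw [Fin.succ_zero_eq_one]; ring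
    _ ≤ (2⁻¹ * ((η^2 + (e 0 + 2*π*ξ)^2)⁻¹ + (η^2 + (e 1 + 2*π*ξ)^2)⁻¹)) * η⁻¹^k := by
        apply mul_le_mul h01 hrest hnn (by positivity)
    _ = η⁻¹^k * (2⁻¹ * ((η^2 + (e 0 + 2*π*ξ)^2)⁻¹ + (η^2 + (e 1 + 2*π*ξ)^2)⁻¹)) := by ring


open MeasureTheory Real in
theorem stmt_17 (n : ℕ) (hn : 1 ≤ n) (t : ℝ) (ht : 0 < t) (e : Fin (n+1) → ℝ) :
    (∫ s in {s : Fin n → ℝ | (∀ j, 0 ≤ s j) ∧ ∑ j, s j ≤ t},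
        (∏ j : Fin n, Complex.exp (-Complex.I * ((s j : ℝ) : ℂ) * ((e j.succ : ℝ) : ℂ))) *
          Complex.exp (-Complex.I * ((t - ∑ j, s j : ℝ) : ℂ) * ((e 0 : ℝ) : ℂ)))
      = ((Real.exp ((1/t) * t) / (2 * π) : ℝ) : ℂ) *
          ∫ α : ℝ, Complex.exp (-Complex.I * ((α : ℂ)) * ((t : ℝ) : ℂ)) *
            ∏ j : Fin (n+1), (Complex.I / ((α : ℂ) - ((e j : ℝ) : ℂ) + Complex.I * ((1/t : ℝ) : ℂ))) := by
  obtain ⟨k, rfl⟩ : ∃ k, n = k + 1 := ⟨n - 1, (Nat.succ_pred_eq_of_pos hn).symm⟩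
  set η := 1/t with hηdef
  have hη : 0 < η := by positivity
  set c : Fin (k+2) → ℂ := fun j => (η:ℂ) + Complex.I * (e j : ℂ) with hcdef
  have hc : ∀ j, 0 < (c j).re := by
    intro j
    simp [hcdef, hη]
  obtain ⟨hint, hF, hcont⟩ := S_props (k+1) c hc
  -- Step A : LHS = e^{ηt} * S (k+1) c t
  have stepA : (∫ s in {s : Fin (k+1) → ℝ | (∀ j, 0 ≤ s j) ∧ ∑ j, s j ≤ t},
        (∏ j : Fin (k+1), Complex.exp (-Complex.I * ((s j : ℝ) : ℂ) * ((e j.succ : ℝ) : ℂ))) *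
          Complex.exp (-Complex.I * ((t - ∑ j, s j : ℝ) : ℂ) * ((e 0 : ℝ) : ℂ)))
      = ((Real.exp (η*t) : ℝ) : ℂ) * S (k+1) c t := by
    rw [S, ← MeasureTheory.integral_const_mul]
    apply MeasureTheory.integral_congr_ae
    filter_upwards with s
    have hsum : ∑ j : Fin (k+1), -(c j.succ * ((s j : ℝ) : ℂ))
        = -((η:ℂ) * ((∑ j, s j : ℝ) : ℂ)) + ∑ j : Fin (k+1), (-Complex.I * ((s j : ℝ) : ℂ) * ((e j.succ : ℝ) : ℂ)) := by
      push_cast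
      rw [Finset.mul_sum, ← Finset.sum_neg_distrib, ← Finset.sum_add_distrib]
      apply Finset.sum_congr rfl
      intro j _
      simp only [hcdef]
      ring
    rw [← Complex.exp_sum, ← Complex.exp_sum, ← Complex.exp_add, ← Complex.exp_add,
      Complex.ofReal_exp, ← Complex.exp_add]
    rw [hsum]
    congr 1
    simp only [hcdef]
    push_cast
    ring
  -- inversion
  have hFP : Integrable (𝓕 (S (k+1) c)) :=
    (P_integrable k hη e).congr (Filter.Eventually.of_forall fun ξ => (hF ξ).symm)
  have hinv : 𝓕⁻ (𝓕 (S (k+1) c)) t = S (k+1) c t :=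
    hint.fourierInv_fourier_eq hFP ((hcont (by omega)).continuousAt)
  have hS : S (k+1) c t = ∫ ξ : ℝ, Complex.exp (((-2) * π * ξ * (-t) : ℝ) * Complex.I) •
      (∏ j, (c j + ((2*π*ξ : ℝ) : ℂ) * Complex.I)⁻¹) := by
    conv_lhs => rw [← hinv]
    rw [Real.fourierInv_eq_fourier_neg,
      Real.fourier_real_eq_integral_exp_smul]
    apply MeasureTheory.integral_congr_ae
    filter_upwards with ξ
    rw [hF ξ]
  -- change of variables
  have hpoint : ∀ ξ : ℝ,
      (Complex.exp (-Complex.I * ((-(2*π)*ξ : ℝ) : ℂ) * ((t : ℝ) : ℂ)) *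
        ∏ j : Fin (k+2), (Complex.I / (((-(2*π)*ξ : ℝ) : ℂ) - ((e j : ℝ) : ℂ) + Complex.I * ((η : ℝ) : ℂ))))
      = Complex.exp (((-2) * π * ξ * (-t) : ℝ) * Complex.I) •
          (∏ j, (c j + ((2*π*ξ : ℝ) : ℂ) * Complex.I)⁻¹) := by
    intro ξ
    rw [smul_eq_mul]
    congr 1
    · congr 1
      push_cast
      ring
    · apply Finset.prod_congr rfl
      intro j _
      have hCne : c j + ((2*π*ξ : ℝ) : ℂ) * Complex.I ≠ 0 := by
        intro h
        have h2 : (c j + ((2*π*ξ : ℝ) : ℂ) * Complex.I).re = η := by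
          simp [hcdef]
        rw [h] at h2
        simp at h2
        exact hη.ne h2
      have hD : ((-(2*π)*ξ : ℝ) : ℂ) - ((e j : ℝ) : ℂ) + Complex.I * ((η : ℝ) : ℂ)
          = Complex.I * (c j + ((2*π*ξ : ℝ) : ℂ) * Complex.I) := by
        simp only [hcdef]
        push_cast
        rw [Complex.ext_iff]
        constructor <;> simp <;> ring
      rw [hD, inv_eq_one_div,
        div_eq_div_iff (mul_ne_zero Complex.I_ne_zero hCne) hCne]
      ring
  have hTI : (∫ α : ℝ, Complex.exp (-Complex.I * ((α : ℂ)) * ((t : ℝ) : ℂ)) *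
        ∏ j : Fin (k+2), (Complex.I / ((α : ℂ) - ((e j : ℝ) : ℂ) + Complex.I * ((η : ℝ) : ℂ))))
      = (2*π : ℝ) • ∫ ξ : ℝ, Complex.exp (((-2) * π * ξ * (-t) : ℝ) * Complex.I) •
          (∏ j, (c j + ((2*π*ξ : ℝ) : ℂ) * Complex.I)⁻¹) := by
    have hcv := MeasureTheory.Measure.integral_comp_mul_left
      (fun α : ℝ => Complex.exp (-Complex.I * ((α : ℂ)) * ((t : ℝ) : ℂ)) *
        ∏ j : Fin (k+2), (Complex.I / ((α : ℂ) - ((e j : ℝ) : ℂ) + Complex.I * ((η : ℝ) : ℂ))))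
      (-(2*π))
    rw [show |(-(2*π))⁻¹| = (2*π : ℝ)⁻¹ by
      rw [abs_inv, abs_neg, abs_of_pos (by positivity)]] at hcv
    simp_rw [hpoint] at hcv
    rw [hcv, smul_smul, mul_inv_cancel₀ (by positivity : (2*π : ℝ) ≠ 0), one_smul]
  rw [stepA, hTI, ← hS]
  rw [Complex.real_smul]
  push_cast
  have hπ : ((π : ℝ) : ℂ) ≠ 0 := Complex.ofReal_ne_zero.mpr Real.pi_ne_zero
  field_simp
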